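/- There exists a constant c > 0 such that for every n ≥ 1, every bipartite permutation graph H that contains, as induced subgraphs, all bipartite permutation graphs on at most n vertices having no induced 3K_{1,6} (the disjoint union of three copies of the star K_{1,6}) has at least c·n^{3/2} vertices. -/

import Mathlib

open SimpleGraph

/-- A bipartite permutation graph is a letter graph with the path decoder
over some finite alphabet. -/
def IsBPG {V : Type*} [Fintype V] (G : SimpleGraph V) : Prop :=
  ∃ (k : ℕ) (v : Fin (Fintype.card V) ≃ V) (w : Fin (Fintype.card V) → Fin k),
    ∀ i j : Fin (Fintype.card V), i < j →
      (G.Adj (v i) (v j) ↔ (w j : ℕ) = (w i : ℕ) + 1)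

/-- The disjoint union of three copies of the star `K_{1,6}`. -/
def threeK16 : SimpleGraph (Fin 3 × Fin 7) :=
  SimpleGraph.fromRel (fun x y => x.1 = y.1 ∧ x.2 = 0)

/-! ### Letter graphs over the path decoder -/

/-- The letter graph of a word `f` over the natural numbers with the path decoder. -/
def letterGraph (n : ℕ) (f : Fin n → ℕ) : SimpleGraph (Fin n) where
  Adj i j := (i < j ∧ f j = f i + 1) ∨ (j < i ∧ f i = f j + 1)
  symm := by
    refine ⟨fun i j h => ?_⟩
    rcases h with ⟨h1, h2⟩ | ⟨h1, h2⟩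
    · exact Or.inr ⟨h1, h2⟩
    · exact Or.inl ⟨h1, h2⟩
  loopless := by
    refine ⟨fun i h => ?_⟩
    rcases h with ⟨h1, _⟩ | ⟨h1, _⟩ <;> exact lt_irrefl _ h1

lemma letterGraph_adj {n : ℕ} (f : Fin n → ℕ) (i j : Fin n) :
    (letterGraph n f).Adj i j ↔ (i < j ∧ f j = f i + 1) ∨ (j < i ∧ f i = f j + 1) :=
  Iff.rfl

lemma isBPG_letterGraph (n : ℕ) (f : Fin n → ℕ) : IsBPG (letterGraph n f) := by
  classical
  refine ⟨(Finset.univ.sup f) + 1, finCongr (Fintype.card_fin n),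
    fun i => ⟨f (finCongr (Fintype.card_fin n) i),
      Nat.lt_succ_of_le (Finset.le_sup (Finset.mem_univ _))⟩, ?_⟩
  intro i j hij
  have hvij : (finCongr (Fintype.card_fin n) i) < (finCongr (Fintype.card_fin n) j) := by
    simpa only [Fin.lt_def, finCongr_apply, Fin.coe_cast] using hij
  constructor
  · intro h
    rcases (letterGraph_adj f _ _).1 h with ⟨_, h2⟩ | ⟨h1, _⟩
    · exact h2
    · exact absurd hvij (not_lt.2 (le_of_lt h1))
  · intro h
    exact (letterGraph_adj f _ _).2 (Or.inl ⟨hvij, h⟩)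

section Win
variable {p0 p1 p2 q0 q1 q2 c0 c1 c2 d0 d1 d2 : ℤ}

lemma adjPos {p q a b : ℤ} (h : (p < q ∧ b = a + 1) ∨ (q < p ∧ a = b + 1))
    (hb : b = a + 1) : p < q := by
  rcases h with ⟨h1, _⟩ | ⟨_, h2⟩
  · exact h1
  · omega

lemma adjNeg {p q a b : ℤ} (h : (p < q ∧ b = a + 1) ∨ (q < p ∧ a = b + 1))
    (hb : a = b + 1) : q < p := by
  rcases h with ⟨_, h2⟩ | ⟨h1, _⟩
  · omega
  · exact h1

lemma nonadjPos {p q a b : ℤ} (h : ¬ ((p < q ∧ b = a + 1) ∨ (q < p ∧ a = b + 1)))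
    (hb : b = a + 1) (hne : p ≠ q) : q < p := by
  push_neg at h
  have h1 := h.1
  rcases lt_trichotomy p q with hc | hc | hc
  · exact absurd hb (h1 hc)
  · exact absurd hc hne
  · exact hc

lemma nonadjNeg {p q a b : ℤ} (h : ¬ ((p < q ∧ b = a + 1) ∨ (q < p ∧ a = b + 1)))
    (hb : a = b + 1) (hne : p ≠ q) : p < q := by
  push_neg at h
  have h2 := h.2
  rcases lt_trichotomy p q with hc | hc | hc
  · exact hc
  · exact absurd hc hne
  · exact absurd hb (h2 hc)

/-- Hypothesis pack for a width-3 comb window. -/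
def WinH (p0 p1 p2 q0 q1 q2 c0 c1 c2 d0 d1 d2 : ℤ) : Prop :=
  ((p0 < p1 ∧ c1 = c0 + 1) ∨ (p1 < p0 ∧ c0 = c1 + 1)) ∧
  ((p1 < p2 ∧ c2 = c1 + 1) ∨ (p2 < p1 ∧ c1 = c2 + 1)) ∧
  ((p0 < q0 ∧ d0 = c0 + 1) ∨ (q0 < p0 ∧ c0 = d0 + 1)) ∧
  ((p1 < q1 ∧ d1 = c1 + 1) ∨ (q1 < p1 ∧ c1 = d1 + 1)) ∧
  ((p2 < q2 ∧ d2 = c2 + 1) ∨ (q2 < p2 ∧ c2 = d2 + 1)) ∧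
  (¬ ((p0 < q2 ∧ d2 = c0 + 1) ∨ (q2 < p0 ∧ c0 = d2 + 1))) ∧
  (¬ ((p2 < q0 ∧ d0 = c2 + 1) ∨ (q0 < p2 ∧ c2 = d0 + 1))) ∧
  (¬ ((q0 < q1 ∧ d1 = d0 + 1) ∨ (q1 < q0 ∧ d0 = d1 + 1))) ∧
  (¬ ((q1 < q2 ∧ d2 = d1 + 1) ∨ (q2 < q1 ∧ d1 = d2 + 1))) ∧
  p0 ≠ q2 ∧ p2 ≠ q0 ∧ q0 ≠ q1 ∧ q1 ≠ q2

lemma winB1 (h : WinH p0 p1 p2 q0 q1 q2 c0 c1 c2 d0 d1 d2)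
    (h1 : c1 = c0 + 1) (h2 : c2 = c1 + 1) (h3 : d0 = c0 + 1) (h4 : d1 = c1 - 1) :
    False := by
  obtain ⟨A01, A12, F0, F1, F2, M02, M20, G01, G12, u02, u20, v01, v12⟩ := h
  have k1 := adjPos A01 h1
  have k2 := adjPos A12 h2
  have k3 := adjNeg F1 (by omega)
  have k4 := nonadjNeg M20 (by omega) u20
  have k5 := nonadjNeg G01 (by omega) v01
  omega

lemma winB2 (h : WinH p0 p1 p2 q0 q1 q2 c0 c1 c2 d0 d1 d2)
    (h1 : c1 = c0 + 1) (h2 : c2 = c1 + 1) (h3 : d1 = c1 + 1) (h4 : d2 = c2 - 1) :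
    False := by
  obtain ⟨A01, A12, F0, F1, F2, M02, M20, G01, G12, u02, u20, v01, v12⟩ := h
  have k1 := adjPos A01 h1
  have k2 := adjPos F1 h3
  have k3 := adjNeg F2 (by omega)
  have k4 := nonadjPos M02 (by omega) u02
  have k5 := nonadjNeg G12 (by omega) v12
  omega

lemma winB3 (h : WinH p0 p1 p2 q0 q1 q2 c0 c1 c2 d0 d1 d2)
    (h1 : c1 = c0 - 1) (h2 : c2 = c1 - 1) (h3 : d0 = c0 - 1) (h4 : d1 = c1 + 1) :
    False := by
  obtain ⟨A01, A12, F0, F1, F2, M02, M20, G01, G12, u02, u20, v01, v12⟩ := h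
  have k1 := adjNeg A01 (by omega)
  have k2 := adjPos F1 h4
  have k3 := nonadjPos G01 (by omega) v01
  have k4 := nonadjPos M20 (by omega) u20
  omega

lemma winB4 (h : WinH p0 p1 p2 q0 q1 q2 c0 c1 c2 d0 d1 d2)
    (h1 : c1 = c0 - 1) (h2 : c2 = c1 - 1) (h3 : d1 = c1 - 1) (h4 : d2 = c2 + 1) :
    False := by
  obtain ⟨A01, A12, F0, F1, F2, M02, M20, G01, G12, u02, u20, v01, v12⟩ := h
  have k1 := adjNeg A01 (by omega)
  have k2 := adjNeg F1 (by omega)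
  have k3 := adjPos F2 h4
  have k4 := nonadjNeg M02 (by omega) u02
  have k5 := nonadjPos G12 (by omega) v12
  omega

lemma winPeak (h : WinH p0 p1 p2 q0 q1 q2 c0 c1 c2 d0 d1 d2)
    (h1 : c1 = c0 + 1) (h2 : c2 = c1 - 1) :
    (d0 = c0 - 1 ∧ d1 = c1 - 1 ∧ d2 = c2 + 1) ∨
    (d0 = c0 + 1 ∧ d1 = c1 - 1 ∧ d2 = c2 - 1) := by
  obtain ⟨A01, A12, F0, F1, F2, M02, M20, G01, G12, u02, u20, v01, v12⟩ := h
  have hd0 : d0 = c0 + 1 ∨ d0 = c0 - 1 := by rcases F0 with ⟨_, h⟩ | ⟨_, h⟩ <;> omega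
  have hd1 : d1 = c1 + 1 ∨ d1 = c1 - 1 := by rcases F1 with ⟨_, h⟩ | ⟨_, h⟩ <;> omega
  have hd2 : d2 = c2 + 1 ∨ d2 = c2 - 1 := by rcases F2 with ⟨_, h⟩ | ⟨_, h⟩ <;> omega
  rcases hd0 with e0 | e0 <;> rcases hd1 with e1 | e1
  · -- (+,+,·) : kill
    exfalso
    have k1 := adjPos F0 e0
    have k2 := adjPos F1 e1
    have k3 := nonadjPos M20 (by omega) u20
    have k4 := nonadjPos G01 (by omega) v01
    have k5 := adjNeg A12 (by omega)
    omega
  · -- (+,-,·)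
    rcases hd2 with e2 | e2
    · -- (+,-,+) : kill
      exfalso
      have k1 := adjPos F0 e0
      have k2 := adjNeg F1 (by omega)
      have k3 := adjPos F2 e2
      have k4 := nonadjNeg G01 (by omega) v01
      have k5 := nonadjPos M02 (by omega) u02
      have k6 := nonadjPos M20 (by omega) u20
      omega
    · exact Or.inr ⟨e0, e1, e2⟩
  · -- (-,+,·) : kill both
    exfalso
    rcases hd2 with e2 | e2
    · -- (-,+,+)
      have k1 := adjPos F2 e2
      have k2 := nonadjPos M02 (by omega) u02
      have k3 := nonadjNeg G12 (by omega) v12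
      have k4 := adjPos F1 e1
      have k5 := adjPos A01 h1
      omega
    · -- (-,+,-)
      have k1 := adjNeg F0 (by omega)
      have k2 := nonadjNeg M02 (by omega) u02
      have k3 := adjNeg F2 (by omega)
      have k4 := nonadjNeg M20 (by omega) u20
      omega
  · -- (-,-,·)
    rcases hd2 with e2 | e2
    · exact Or.inl ⟨e0, e1, e2⟩
    · -- (-,-,-) : kill
      exfalso
      have k1 := adjNeg F0 (by omega)
      have k2 := adjNeg F2 (by omega)
      have k3 := nonadjNeg M02 (by omega) u02
      have k4 := nonadjNeg M20 (by omega) u20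
      omega

lemma winDip (h : WinH p0 p1 p2 q0 q1 q2 c0 c1 c2 d0 d1 d2)
    (h1 : c1 = c0 - 1) (h2 : c2 = c1 + 1) :
    (d0 = c0 - 1 ∧ d1 = c1 + 1 ∧ d2 = c2 + 1) ∨
    (d0 = c0 + 1 ∧ d1 = c1 + 1 ∧ d2 = c2 - 1) := by
  obtain ⟨A01, A12, F0, F1, F2, M02, M20, G01, G12, u02, u20, v01, v12⟩ := h
  have hd0 : d0 = c0 + 1 ∨ d0 = c0 - 1 := by rcases F0 with ⟨_, h⟩ | ⟨_, h⟩ <;> omega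
  have hd1 : d1 = c1 + 1 ∨ d1 = c1 - 1 := by rcases F1 with ⟨_, h⟩ | ⟨_, h⟩ <;> omega
  have hd2 : d2 = c2 + 1 ∨ d2 = c2 - 1 := by rcases F2 with ⟨_, h⟩ | ⟨_, h⟩ <;> omega
  rcases hd0 with e0 | e0 <;> rcases hd1 with e1 | e1
  · -- (+,+,·)
    rcases hd2 with e2 | e2
    · -- (+,+,+) : kill
      exfalso
      have k1 := adjPos F0 e0
      have k2 := adjPos F2 e2
      have k3 := nonadjPos M02 (by omega) u02
      have k4 := nonadjPos M20 (by omega) u20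
      omega
    · exact Or.inr ⟨e0, e1, e2⟩
  · -- (+,-,·) : kill both
    exfalso
    rcases hd2 with e2 | e2
    · -- (+,-,+)
      have k1 := adjPos F0 e0
      have k2 := adjPos F2 e2
      have k3 := nonadjPos M02 (by omega) u02
      have k4 := nonadjPos M20 (by omega) u20
      omega
    · -- (+,-,-)
      have k1 := adjNeg F1 (by omega)
      have k2 := adjNeg F2 (by omega)
      have k3 := nonadjNeg M02 (by omega) u02
      have k4 := nonadjPos G12 (by omega) v12
      have k5 := adjNeg A01 (by omega)
      omega
  · -- (-,+,·)
    rcases hd2 with e2 | e2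
    · exact Or.inl ⟨e0, e1, e2⟩
    · -- (-,+,-) : kill
      exfalso
      have k1 := adjNeg F0 (by omega)
      have k2 := adjPos F1 e1
      have k3 := adjNeg F2 (by omega)
      have k4 := nonadjNeg M20 (by omega) u20
      have k5 := nonadjPos G01 (by omega) v01
      have k6 := nonadjNeg M02 (by omega) u02
      omega
  · -- (-,-,·) : kill both
    exfalso
    have k1 := adjNeg F0 (by omega)
    have k2 := adjNeg F1 (by omega)
    have k3 := nonadjNeg M20 (by omega) u20
    have k4 := nonadjNeg G01 (by omega) v01
    have k5 := adjPos A12 h2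
    omega
end Win


lemma teleUp (c : ℕ → ℤ) {a b : ℕ} (hab : a ≤ b)
    (h : ∀ j, a ≤ j → j + 1 ≤ b → c (j + 1) = c j + 1) : c b = c a + (b - a : ℕ) := by
  induction b, hab using Nat.le_induction with
  | base => simp
  | succ b hab ih =>
      have h1 : c (b + 1) = c b + 1 := h b hab (le_refl _)
      have h2 : c b = c a + (b - a : ℕ) := ih (fun j hj hjb => h j hj (by omega))
      have h3 : ((b + 1 - a : ℕ) : ℤ) = ((b - a : ℕ) : ℤ) + 1 := by omega
      omega

lemma teleDown (c : ℕ → ℤ) {a b : ℕ} (hab : a ≤ b)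
    (h : ∀ j, a ≤ j → j + 1 ≤ b → c (j + 1) = c j - 1) : c b = c a - (b - a : ℕ) := by
  induction b, hab using Nat.le_induction with
  | base => simp
  | succ b hab ih =>
      have h1 : c (b + 1) = c b - 1 := h b hab (le_refl _)
      have h2 : c b = c a - (b - a : ℕ) := ih (fun j hj hjb => h j hj (by omega))
      have h3 : ((b + 1 - a : ℕ) : ℤ) = ((b - a : ℕ) : ℤ) + 1 := by omega
      omega

lemma teleBnd (c : ℕ → ℤ) {a b : ℕ} (hab : a ≤ b)
    (h : ∀ j, a ≤ j → j + 1 ≤ b → c (j + 1) = c j + 1 ∨ c (j + 1) = c j - 1) :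
    c b ≤ c a + (b - a : ℕ) ∧ c a - (b - a : ℕ) ≤ c b := by
  induction b, hab using Nat.le_induction with
  | base => simp
  | succ b hab ih =>
      have h1 := h b hab (le_refl _)
      have h2 := ih (fun j hj hjb => h j hj (by omega))
      have h3 : ((b + 1 - a : ℕ) : ℤ) = ((b - a : ℕ) : ℤ) + 1 := by omega
      omega

section Seq
variable (k : ℕ) (c d : ℕ → ℤ)

lemma absorbUp
    (hstep : ∀ j, j + 1 < k → c (j + 1) = c j + 1 ∨ c (j + 1) = c j - 1)
    (hside : ∀ j, j < k → d j = c j + 1 ∨ d j = c j - 1)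
    (hB2 : ∀ j, j + 2 < k → c (j + 1) = c j + 1 → c (j + 2) = c (j + 1) + 1 →
      d (j + 1) = c (j + 1) + 1 → d (j + 2) = c (j + 2) - 1 → False)
    (hPk : ∀ j, j + 2 < k → c (j + 1) = c j + 1 → c (j + 2) = c (j + 1) - 1 →
      (d j = c j - 1 ∧ d (j + 1) = c (j + 1) - 1 ∧ d (j + 2) = c (j + 2) + 1) ∨
      (d j = c j + 1 ∧ d (j + 1) = c (j + 1) - 1 ∧ d (j + 2) = c (j + 2) - 1))
    (j : ℕ)
    (H : c (j + 1) = c j + 1 ∧ d j = c j + 1 ∧ d (j + 1) = c (j + 1) + 1) :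
    ∀ l, j ≤ l → l + 1 < k →
      c (l + 1) = c l + 1 ∧ d l = c l + 1 ∧ d (l + 1) = c (l + 1) + 1 := by
  intro l hl
  induction l, hl using Nat.le_induction with
  | base => intro _; exact H
  | succ l hl ih =>
      intro hk2
      obtain ⟨h1, h2, h3⟩ := ih (by omega)
      rcases hstep (l + 1) (by omega) with h4 | h4
      · rcases hside (l + 2) (by omega) with h5 | h5
        · exact ⟨h4, h3, h5⟩
        · exact (hB2 l (by omega) h1 h4 h3 h5).elim
      · rcases hPk l (by omega) h1 h4 with ⟨e1, e2, e3⟩ | ⟨e1, e2, e3⟩ <;> omega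

lemma absorbDown
    (hstep : ∀ j, j + 1 < k → c (j + 1) = c j + 1 ∨ c (j + 1) = c j - 1)
    (hside : ∀ j, j < k → d j = c j + 1 ∨ d j = c j - 1)
    (hB4 : ∀ j, j + 2 < k → c (j + 1) = c j - 1 → c (j + 2) = c (j + 1) - 1 →
      d (j + 1) = c (j + 1) - 1 → d (j + 2) = c (j + 2) + 1 → False)
    (hDp : ∀ j, j + 2 < k → c (j + 1) = c j - 1 → c (j + 2) = c (j + 1) + 1 →
      (d j = c j - 1 ∧ d (j + 1) = c (j + 1) + 1 ∧ d (j + 2) = c (j + 2) + 1) ∨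
      (d j = c j + 1 ∧ d (j + 1) = c (j + 1) + 1 ∧ d (j + 2) = c (j + 2) - 1))
    (j : ℕ)
    (H : c (j + 1) = c j - 1 ∧ d j = c j - 1 ∧ d (j + 1) = c (j + 1) - 1) :
    ∀ l, j ≤ l → l + 1 < k →
      c (l + 1) = c l - 1 ∧ d l = c l - 1 ∧ d (l + 1) = c (l + 1) - 1 := by
  intro l hl
  induction l, hl using Nat.le_induction with
  | base => intro _; exact H
  | succ l hl ih =>
      intro hk2
      obtain ⟨h1, h2, h3⟩ := ih (by omega)
      rcases hstep (l + 1) (by omega) with h4 | h4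
      · rcases hDp l (by omega) h1 h4 with ⟨e1, e2, e3⟩ | ⟨e1, e2, e3⟩ <;> omega
      · rcases hside (l + 2) (by omega) with h5 | h5
        · exact (hB4 l (by omega) h1 h4 h3 h5).elim
        · exact ⟨h4, h3, h5⟩

lemma seqAux (hk : 4 ≤ k)
    (hstep : ∀ j, j + 1 < k → c (j + 1) = c j + 1 ∨ c (j + 1) = c j - 1)
    (hside : ∀ j, j < k → d j = c j + 1 ∨ d j = c j - 1)
    (hB2 : ∀ j, j + 2 < k → c (j + 1) = c j + 1 → c (j + 2) = c (j + 1) + 1 →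
      d (j + 1) = c (j + 1) + 1 → d (j + 2) = c (j + 2) - 1 → False)
    (hB3 : ∀ j, j + 2 < k → c (j + 1) = c j - 1 → c (j + 2) = c (j + 1) - 1 →
      d j = c j - 1 → d (j + 1) = c (j + 1) + 1 → False)
    (hB4 : ∀ j, j + 2 < k → c (j + 1) = c j - 1 → c (j + 2) = c (j + 1) - 1 →
      d (j + 1) = c (j + 1) - 1 → d (j + 2) = c (j + 2) + 1 → False)
    (hPk : ∀ j, j + 2 < k → c (j + 1) = c j + 1 → c (j + 2) = c (j + 1) - 1 →
      (d j = c j - 1 ∧ d (j + 1) = c (j + 1) - 1 ∧ d (j + 2) = c (j + 2) + 1) ∨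
      (d j = c j + 1 ∧ d (j + 1) = c (j + 1) - 1 ∧ d (j + 2) = c (j + 2) - 1))
    (hDp : ∀ j, j + 2 < k → c (j + 1) = c j - 1 → c (j + 2) = c (j + 1) + 1 →
      (d j = c j - 1 ∧ d (j + 1) = c (j + 1) + 1 ∧ d (j + 2) = c (j + 2) + 1) ∨
      (d j = c j + 1 ∧ d (j + 1) = c (j + 1) + 1 ∧ d (j + 2) = c (j + 2) - 1))
    (h0 : c 1 = c 0 + 1) :
    (k : ℤ) - 3 ≤ |c (k - 1) - c 0| := by
  classical
  have habs1 := le_abs_self (c (k - 1) - c 0)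
  have habs2 := neg_abs_le (c (k - 1) - c 0)
  by_cases hA : ∃ j, j + 1 < k ∧ c (j + 1) = c j - 1
  · obtain ⟨hj0k, hdown⟩ := Nat.find_spec hA
    set j0 := Nat.find hA with hj0def
    have hup : ∀ j, j < j0 → c (j + 1) = c j + 1 := by
      intro j hj
      have hjk : j + 1 < k := by omega
      rcases hstep j hjk with h | h
      · exact h
      · rw [hj0def] at hj
        exact absurd ⟨hjk, h⟩ (Nat.find_min hA hj)
    have hj0pos : j0 ≠ 0 := by
      intro h
      rw [h] at hdown
      norm_num at hdown
      omega
    have hcj0 : c j0 = c 0 + (j0 : ℕ) := by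
      have := teleUp c (Nat.zero_le j0) (fun j _ hjb => hup j (by omega))
      simpa using this
    by_cases htail : j0 + 2 < k
    · have e1 : j0 - 1 + 1 = j0 := by omega
      have e2 : j0 - 1 + 2 = j0 + 1 := by omega
      have hpk := hPk (j0 - 1) (by omega)
        (hup (j0 - 1) (by omega))
        (by rw [e1, e2]; exact hdown)
      rw [e1, e2] at hpk
      rcases hpk with ⟨f0, f1, f2⟩ | ⟨f0, f1, f2⟩
      · rcases hstep (j0 + 1) (by omega) with g | g
        · rcases hDp j0 htail hdown g with ⟨i0, i1, i2⟩ | ⟨i0, i1, i2⟩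
          · have habs := absorbUp k c d hstep hside hB2 hPk (j0 + 1) ⟨g, i1, i2⟩
            have htel : c (k - 1) = c (j0 + 1) + ((k - 1) - (j0 + 1) : ℕ) :=
              teleUp c (by omega) (fun l hl hlb => (habs l hl (by omega)).1)
            have hval : c (j0 + 1) = c j0 - 1 := hdown
            omega
          · omega
        · exact (hB3 j0 htail hdown g f1 f2).elim
      · by_cases hj1 : j0 = 1
        · rw [hj1] at hdown f1 f2
          have habs := absorbDown k c d hstep hside hB4 hDp 1 ⟨hdown, f1, f2⟩
          have htel : c (k - 1) = c 1 - ((k - 1) - 1 : ℕ) :=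
            teleDown c (by omega) (fun l hl hlb => (habs l hl (by omega)).1)
          omega
        · have e3 : j0 - 2 + 1 = j0 - 1 := by omega
          have e4 : j0 - 2 + 2 = j0 := by omega
          refine (hB2 (j0 - 2) (by omega)
            (hup (j0 - 2) (by omega))
            ?_
            (by rw [e3]; exact f0)
            (by rw [e4]; exact f1)).elim
          have h5 := hup (j0 - 1) (by omega)
          rw [e1] at h5
          rw [e3, e4]
          exact h5
    · -- tail : j0 + 2 ≥ k, i.e. j0 = k - 2
      have hj0eq : j0 = k - 2 := by omega
      have hcc : c (k - 1) = c (j0 + 1) := by rw [show k - 1 = j0 + 1 by omega]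
      omega
  · push_neg at hA
    have htel : c (k - 1) = c 0 + ((k - 1) : ℕ) := by
      have := teleUp c (Nat.zero_le (k - 1)) (fun j _ hjb => by
        rcases hstep j (by omega) with h | h
        · exact h
        · exact absurd h (hA j (by omega)))
      simpa using this
    omega

end Seq

lemma seqSpan (k : ℕ) (c d : ℕ → ℤ)
    (hstep : ∀ j, j + 1 < k → c (j + 1) = c j + 1 ∨ c (j + 1) = c j - 1)
    (hside : ∀ j, j < k → d j = c j + 1 ∨ d j = c j - 1)
    (hB1 : ∀ j, j + 2 < k → c (j + 1) = c j + 1 → c (j + 2) = c (j + 1) + 1 →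
      d j = c j + 1 → d (j + 1) = c (j + 1) - 1 → False)
    (hB2 : ∀ j, j + 2 < k → c (j + 1) = c j + 1 → c (j + 2) = c (j + 1) + 1 →
      d (j + 1) = c (j + 1) + 1 → d (j + 2) = c (j + 2) - 1 → False)
    (hB3 : ∀ j, j + 2 < k → c (j + 1) = c j - 1 → c (j + 2) = c (j + 1) - 1 →
      d j = c j - 1 → d (j + 1) = c (j + 1) + 1 → False)
    (hB4 : ∀ j, j + 2 < k → c (j + 1) = c j - 1 → c (j + 2) = c (j + 1) - 1 →
      d (j + 1) = c (j + 1) - 1 → d (j + 2) = c (j + 2) + 1 → False)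
    (hPk : ∀ j, j + 2 < k → c (j + 1) = c j + 1 → c (j + 2) = c (j + 1) - 1 →
      (d j = c j - 1 ∧ d (j + 1) = c (j + 1) - 1 ∧ d (j + 2) = c (j + 2) + 1) ∨
      (d j = c j + 1 ∧ d (j + 1) = c (j + 1) - 1 ∧ d (j + 2) = c (j + 2) - 1))
    (hDp : ∀ j, j + 2 < k → c (j + 1) = c j - 1 → c (j + 2) = c (j + 1) + 1 →
      (d j = c j - 1 ∧ d (j + 1) = c (j + 1) + 1 ∧ d (j + 2) = c (j + 2) + 1) ∨
      (d j = c j + 1 ∧ d (j + 1) = c (j + 1) + 1 ∧ d (j + 2) = c (j + 2) - 1)) :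
    (k : ℤ) - 3 ≤ |c (k - 1) - c 0| := by
  rcases le_or_gt k 3 with hk | hk
  · have := abs_nonneg (c (k - 1) - c 0)
    omega
  · rcases hstep 0 (by omega) with h0 | h0
    · exact seqAux k c d (by omega) hstep hside hB2 hB3 hB4 hPk hDp h0
    · have h0' : c 1 = c 0 - 1 := h0
      have hres := seqAux k (fun j => -(c j)) (fun j => -(d j)) (by omega)
        (fun j hj => by have := hstep j hj; omega)
        (fun j hj => by have := hside j hj; omega)
        (fun j hj h1 h2 h3 h4 => by
          exact hB4 j hj (by omega) (by omega) (by omega) (by omega))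
        (fun j hj h1 h2 h3 h4 => by
          exact hB1 j hj (by omega) (by omega) (by omega) (by omega))
        (fun j hj h1 h2 h3 h4 => by
          exact hB2 j hj (by omega) (by omega) (by omega) (by omega))
        (fun j hj h1 h2 => by
          have := hDp j hj (by omega) (by omega)
          omega)
        (fun j hj h1 h2 => by
          have := hPk j hj (by omega) (by omega)
          omega)
        (by omega)
      have hstep1 : (k : ℤ) - 3 ≤ |(-(c (k - 1))) - (-(c 0))| := hres
      have heq : (-(c (k - 1))) - (-(c 0)) = -(c (k - 1) - c 0) := by ring
      rw [heq, abs_neg] at hstep1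
      exact hstep1


/-- The word of the double-hub comb. -/
def wDnat (m k p : ℕ) : ℕ :=
  if p ≤ m then 0
  else if p ≤ m + k then p - m
  else if p ≤ 2*m + k + 1 then k + 1
  else 2*m + 2*k + 2 - p

lemma wDnat_eval (m k p : ℕ) :
    (p ≤ m ∧ wDnat m k p = 0) ∨
    (m < p ∧ p ≤ m + k ∧ wDnat m k p = p - m) ∨
    (m + k < p ∧ p ≤ 2*m + k + 1 ∧ wDnat m k p = k + 1) ∨
    (2*m + k + 1 < p ∧ wDnat m k p = 2*m + 2*k + 2 - p) := by
  unfold wDnat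
  split_ifs with h1 h2 h3 <;> omega

/-- The member graph. -/
def memberG (m k : ℕ) : SimpleGraph (Fin (2*m+2*k)) :=
  letterGraph (2*m+2*k) (fun x => wDnat m k x.val)

lemma memberG_adj (m k : ℕ) (p q : Fin (2*m+2*k)) :
    (memberG m k).Adj p q ↔
      (p.val < q.val ∧ wDnat m k q.val = wDnat m k p.val + 1) ∨
      (q.val < p.val ∧ wDnat m k p.val = wDnat m k q.val + 1) := by
  unfold memberG letterGraph
  simp only [Fin.lt_def]


lemma nbrPoolA (m k : ℕ) (hk : 3 ≤ k) (z x : Fin (2*m+2*k))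
    (h : (memberG m k).Adj z x) (hz : z.val ≤ m) : x.val = m + 1 := by
  have a := (memberG_adj m k z x).1 h
  have ez := wDnat_eval m k z.val
  have ex := wDnat_eval m k x.val
  have hx := x.isLt
  have hzl := z.isLt
  omega

lemma nbrPoolB (m k : ℕ) (hk : 3 ≤ k) (z x : Fin (2*m+2*k))
    (h : (memberG m k).Adj z x) (hz1 : m + k < z.val) (hz2 : z.val ≤ 2*m + k + 1) :
    x.val = m + k := by
  have a := (memberG_adj m k z x).1 h
  have ez := wDnat_eval m k z.val
  have ex := wDnat_eval m k x.val
  have hx := x.isLt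
  have hzl := z.isLt
  omega

lemma nbrPend (m k : ℕ) (hk : 3 ≤ k) (z x : Fin (2*m+2*k))
    (h : (memberG m k).Adj z x) (hz1 : 2*m + k + 1 < z.val) :
    x.val = 3*m + 2*k + 1 - z.val := by
  have a := (memberG_adj m k z x).1 h
  have ez := wDnat_eval m k z.val
  have ex := wDnat_eval m k x.val
  have hx := x.isLt
  have hzl := z.isLt
  omega

lemma nbrSpine (m k : ℕ) (hk : 3 ≤ k) (z x : Fin (2*m+2*k))
    (h : (memberG m k).Adj z x) (hz1 : m + 1 < z.val) (hz2 : z.val < m + k) :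
    x.val = z.val - 1 ∨ x.val = z.val + 1 ∨ x.val = 3*m + 2*k + 1 - z.val := by
  have a := (memberG_adj m k z x).1 h
  have ez := wDnat_eval m k z.val
  have ex := wDnat_eval m k x.val
  have hx := x.isLt
  have hzl := z.isLt
  omega

lemma member_no3K16 (m k : ℕ) (hk : 3 ≤ k) :
    ¬ Nonempty (threeK16 ↪g (memberG m k)) := by
  rintro ⟨f⟩
  have hadj : ∀ (i : Fin 3) (s : Fin 7), s ≠ 0 → (memberG m k).Adj (f (i,0)) (f (i,s)) := by
    intro i s hs
    apply f.map_adj_iff.2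
    rw [threeK16, SimpleGraph.fromRel_adj]
    exact ⟨by simp [Ne.symm hs, Prod.ext_iff], Or.inl ⟨rfl, rfl⟩⟩
  -- each star center must be one of the two hubs
  have key : ∀ i : Fin 3, (f (i,0)).val = m + 1 ∨ (f (i,0)).val = m + k := by
    intro i
    set z := f (i,0) with hz
    have d12 : (f (i,1)).val ≠ (f (i,2)).val := by
      intro h; have := f.injective (Fin.ext h : f (i,1) = f (i,2)); simp [Prod.ext_iff] at this
    have d13 : (f (i,1)).val ≠ (f (i,3)).val := by
      intro h; have := f.injective (Fin.ext h : f (i,1) = f (i,3)); simp [Prod.ext_iff] at this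
    have d14 : (f (i,1)).val ≠ (f (i,4)).val := by
      intro h; have := f.injective (Fin.ext h : f (i,1) = f (i,4)); simp [Prod.ext_iff] at this
    have d23 : (f (i,2)).val ≠ (f (i,3)).val := by
      intro h; have := f.injective (Fin.ext h : f (i,2) = f (i,3)); simp [Prod.ext_iff] at this
    have d24 : (f (i,2)).val ≠ (f (i,4)).val := by
      intro h; have := f.injective (Fin.ext h : f (i,2) = f (i,4)); simp [Prod.ext_iff] at this
    have d34 : (f (i,3)).val ≠ (f (i,4)).val := by
      intro h; have := f.injective (Fin.ext h : f (i,3) = f (i,4)); simp [Prod.ext_iff] at this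
    have bz := z.isLt
    rcases Nat.lt_or_ge z.val (m+1) with hb1 | hb1
    · -- pool A
      exfalso
      have v1 := nbrPoolA m k hk z _ (hadj i 1 (by decide)) (by omega)
      have v2 := nbrPoolA m k hk z _ (hadj i 2 (by decide)) (by omega)
      omega
    rcases Nat.lt_or_ge (m+k) z.val with hb2 | hb2
    · rcases Nat.lt_or_ge (2*m+k+1) z.val with hb3 | hb3
      · -- pendant
        exfalso
        have v1 := nbrPend m k hk z _ (hadj i 1 (by decide)) hb3
        have v2 := nbrPend m k hk z _ (hadj i 2 (by decide)) hb3
        omega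
      · -- pool B
        exfalso
        have v1 := nbrPoolB m k hk z _ (hadj i 1 (by decide)) hb2 hb3
        have v2 := nbrPoolB m k hk z _ (hadj i 2 (by decide)) hb2 hb3
        omega
    -- spine
    by_cases hc1 : z.val = m + 1
    · exact Or.inl hc1
    by_cases hc2 : z.val = m + k
    · exact Or.inr hc2
    exfalso
    have v1 := nbrSpine m k hk z _ (hadj i 1 (by decide)) (by omega) (by omega)
    have v2 := nbrSpine m k hk z _ (hadj i 2 (by decide)) (by omega) (by omega)
    have v3 := nbrSpine m k hk z _ (hadj i 3 (by decide)) (by omega) (by omega)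
    have v4 := nbrSpine m k hk z _ (hadj i 4 (by decide)) (by omega) (by omega)
    omega
  have k0 := key 0
  have k1 := key 1
  have k2 := key 2
  have d01 : (f ((0:Fin 3),(0:Fin 7))).val ≠ (f (1,0)).val := by
    intro h; have := f.injective (Fin.ext h : f (0,0) = f (1,0)); simp [Prod.ext_iff] at this
  have d02 : (f ((0:Fin 3),(0:Fin 7))).val ≠ (f (2,0)).val := by
    intro h; have := f.injective (Fin.ext h : f (0,0) = f (2,0)); simp [Prod.ext_iff] at this
  have d12 : (f ((1:Fin 3),(0:Fin 7))).val ≠ (f (2,0)).val := by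
    intro h; have := f.injective (Fin.ext h : f (1,0) = f (2,0)); simp [Prod.ext_iff] at this
  omega

lemma member_analysis (m k N : ℕ) (hk : 3 ≤ k) (ω : Fin N → ℕ)
    (ψ : Fin (2*m+2*k) → Fin N) (hinj : Function.Injective ψ)
    (hadj : ∀ a b : Fin (2*m+2*k), a ≠ b →
      ((memberG m k).Adj a b ↔
        ((ψ a).val < (ψ b).val ∧ ω (ψ b) = ω (ψ a) + 1) ∨
        ((ψ b).val < (ψ a).val ∧ ω (ψ a) = ω (ψ b) + 1))) :
    ∃ a b : ℤ,
      (k : ℤ) - 3 ≤ |a - b| ∧ |a - b| ≤ (k : ℤ) - 1 ∧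
      (∃ p : Fin N, (ω p : ℤ) = a) ∧ (∃ q : Fin N, (ω q : ℤ) = b) ∧
      m + 1 ≤ (Finset.univ.filter (fun p : Fin N => (ω p : ℤ) = a - 1)).card
            + (Finset.univ.filter (fun p : Fin N => (ω p : ℤ) = a + 1)).card ∧
      m + 1 ≤ (Finset.univ.filter (fun p : Fin N => (ω p : ℤ) = b - 1)).card
            + (Finset.univ.filter (fun p : Fin N => (ω p : ℤ) = b + 1)).card := by
  classical
  set S : ℕ → Fin (2*m+2*k) := (fun j => if h : j < k then (⟨m+1+j, by omega⟩ : Fin (2*m+2*k))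
    else ⟨m+1, by omega⟩) with hSdef
  set L : ℕ → Fin (2*m+2*k) := (fun j => if h0 : j = 0 then (⟨0, by omega⟩ : Fin (2*m+2*k))
    else if h : j ≤ k - 2 then ⟨2*m+2*k - j, by omega⟩ else ⟨m+k+1, by omega⟩) with hLDdef
  set P : Fin (2*m+2*k) → ℤ := (fun x => ((ψ x).val : ℤ)) with hPdef
  set Lam : Fin (2*m+2*k) → ℤ := (fun x => (ω (ψ x) : ℤ)) with hLamdef
  have hSv : ∀ j, j < k → (S j).val = m + 1 + j := by
    intro j hj
    simp only [hSdef]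
    rw [dif_pos hj]
  have hLcase : ∀ j, j < k →
      (j = 0 ∧ (L j).val = 0) ∨ (1 ≤ j ∧ j ≤ k - 2 ∧ (L j).val = 2*m+2*k - j) ∨
      (j = k - 1 ∧ (L j).val = m+k+1) := by
    intro j hj
    by_cases h0 : j = 0
    · left
      refine ⟨h0, ?_⟩
      simp only [hLDdef]
      rw [dif_pos h0]
    by_cases h2 : j ≤ k - 2
    · right; left
      refine ⟨by omega, h2, ?_⟩
      simp only [hLDdef]
      rw [dif_neg h0, dif_pos h2]
    · right; right
      refine ⟨by omega, ?_⟩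
      simp only [hLDdef]
      rw [dif_neg h0, dif_neg h2]
  have hvne : ∀ (x y : Fin (2*m+2*k)), x.val ≠ y.val → x ≠ y := by
    intro x y h hc
    exact h (by rw [hc])
  have hPne : ∀ (x y : Fin (2*m+2*k)), x ≠ y → P x ≠ P y := by
    intro x y hne h
    simp only [hPdef] at h
    exact hne (hinj (Fin.ext (by exact_mod_cast h)))
  have hiff : ∀ a b : Fin (2*m+2*k), a ≠ b → ((memberG m k).Adj a b ↔
      ((P a < P b ∧ Lam b = Lam a + 1) ∨ (P b < P a ∧ Lam a = Lam b + 1))) := by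
    intro a b hne
    rw [hadj a b hne]
    simp only [hPdef, hLamdef]
    constructor <;> intro h <;> omega
  -- basic G facts
  have gSS : ∀ j, j + 1 < k → (memberG m k).Adj (S j) (S (j+1)) := by
    intro j hj
    rw [memberG_adj, hSv j (by omega), hSv (j+1) (by omega)]
    have e1 := wDnat_eval m k (m+1+j)
    have e2 := wDnat_eval m k (m+1+(j+1))
    omega
  have gSL : ∀ l, l < k → (memberG m k).Adj (S l) (L l) := by
    intro l hl
    rw [memberG_adj, hSv l hl]
    have e1 := wDnat_eval m k (m+1+l)
    have e2 := wDnat_eval m k 0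
    have e3 := wDnat_eval m k (2*m+2*k-l)
    have e4 := wDnat_eval m k (m+k+1)
    rcases hLcase l hl with ⟨h0, hv⟩ | ⟨h1, h2, hv⟩ | ⟨h0, hv⟩ <;> rw [hv] <;> omega
  have gSLn : ∀ i l, i < k → l < k → i ≠ l → ¬ (memberG m k).Adj (S i) (L l) := by
    intro i l hi hl hne hA
    rw [memberG_adj, hSv i hi] at hA
    have e1 := wDnat_eval m k (m+1+i)
    have e2 := wDnat_eval m k 0
    have e3 := wDnat_eval m k (2*m+2*k-l)
    have e4 := wDnat_eval m k (m+k+1)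
    rcases hLcase l hl with ⟨h0, hv⟩ | ⟨h1, h2, hv⟩ | ⟨h0, hv⟩ <;> rw [hv] at hA <;> omega
  have gLLn : ∀ i l, i < k → l < k → i ≠ l → ¬ (memberG m k).Adj (L i) (L l) := by
    intro i l hi hl hne hA
    rw [memberG_adj] at hA
    have e2 := wDnat_eval m k 0
    have e3 := wDnat_eval m k (2*m+2*k-i)
    have e4 := wDnat_eval m k (2*m+2*k-l)
    have e5 := wDnat_eval m k (m+k+1)
    rcases hLcase i hi with ⟨h0, hv⟩ | ⟨h1, h2, hv⟩ | ⟨h0, hv⟩ <;>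
      rcases hLcase l hl with ⟨h0', hv'⟩ | ⟨h1', h2', hv'⟩ | ⟨h0', hv'⟩ <;>
      rw [hv, hv'] at hA <;> omega
  -- vertex distinctness
  have neSS : ∀ i l, i < k → l < k → i ≠ l → S i ≠ S l := by
    intro i l hi hl hne
    exact hvne _ _ (by rw [hSv i hi, hSv l hl]; omega)
  have neSL : ∀ i l, i < k → l < k → S i ≠ L l := by
    intro i l hi hl
    apply hvne
    rw [hSv i hi]
    rcases hLcase l hl with ⟨h0, hv⟩ | ⟨h1, h2, hv⟩ | ⟨h0, hv⟩ <;> rw [hv] <;> omega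
  have neLL : ∀ i l, i < k → l < k → i ≠ l → L i ≠ L l := by
    intro i l hi hl hne
    apply hvne
    rcases hLcase i hi with ⟨h0, hv⟩ | ⟨h1, h2, hv⟩ | ⟨h0, hv⟩ <;>
      rcases hLcase l hl with ⟨h0', hv'⟩ | ⟨h1', h2', hv'⟩ | ⟨h0', hv'⟩ <;>
      rw [hv, hv'] <;> omega
  -- windows
  have hwin : ∀ j, j + 2 < k →
      WinH (P (S j)) (P (S (j+1))) (P (S (j+2))) (P (L j)) (P (L (j+1))) (P (L (j+2)))
        (Lam (S j)) (Lam (S (j+1))) (Lam (S (j+2))) (Lam (L j)) (Lam (L (j+1))) (Lam (L (j+2))) := by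
    intro j hj
    have hj0 : j < k := by omega
    have hj1 : j + 1 < k := by omega
    have hj2 : j + 2 < k := hj
    refine ⟨?_, ?_, ?_, ?_, ?_, ?_, ?_, ?_, ?_, ?_, ?_, ?_, ?_⟩
    · exact (hiff _ _ (neSS j (j+1) hj0 hj1 (by omega))).1 (gSS j (by omega))
    · exact (hiff _ _ (neSS (j+1) (j+2) hj1 hj2 (by omega))).1 (gSS (j+1) (by omega))
    · exact (hiff _ _ (neSL j j hj0 hj0)).1 (gSL j hj0)
    · exact (hiff _ _ (neSL (j+1) (j+1) hj1 hj1)).1 (gSL (j+1) hj1)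
    · exact (hiff _ _ (neSL (j+2) (j+2) hj2 hj2)).1 (gSL (j+2) hj2)
    · exact fun hc => gSLn j (j+2) hj0 hj2 (by omega)
        ((hiff _ _ (neSL j (j+2) hj0 hj2)).2 hc)
    · exact fun hc => gSLn (j+2) j hj2 hj0 (by omega)
        ((hiff _ _ (neSL (j+2) j hj2 hj0)).2 hc)
    · exact fun hc => gLLn j (j+1) hj0 hj1 (by omega)
        ((hiff _ _ (neLL j (j+1) hj0 hj1 (by omega))).2 hc)
    · exact fun hc => gLLn (j+1) (j+2) hj1 hj2 (by omega)
        ((hiff _ _ (neLL (j+1) (j+2) hj1 hj2 (by omega))).2 hc)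
    · exact hPne _ _ (neSL j (j+2) hj0 hj2)
    · exact hPne _ _ (neSL (j+2) j hj2 hj0)
    · exact hPne _ _ (neLL j (j+1) hj0 hj1 (by omega))
    · exact hPne _ _ (neLL (j+1) (j+2) hj1 hj2 (by omega))
  -- the letter sequences
  set c : ℕ → ℤ := (fun j => Lam (S j)) with hcdef
  set d : ℕ → ℤ := (fun j => Lam (L j)) with hddef
  have hstep : ∀ j, j + 1 < k → c (j+1) = c j + 1 ∨ c (j+1) = c j - 1 := by
    intro j hj
    have := (hiff _ _ (neSS j (j+1) (by omega) hj (by omega))).1 (gSS j hj)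
    simp only [hcdef]
    rcases this with ⟨_, h⟩ | ⟨_, h⟩ <;> omega
  have hside : ∀ j, j < k → d j = c j + 1 ∨ d j = c j - 1 := by
    intro j hj
    have := (hiff _ _ (neSL j j hj hj)).1 (gSL j hj)
    simp only [hcdef, hddef]
    rcases this with ⟨_, h⟩ | ⟨_, h⟩ <;> omega
  have hspan : (k : ℤ) - 3 ≤ |c (k-1) - c 0| := by
    refine seqSpan k c d hstep hside ?_ ?_ ?_ ?_ ?_ ?_
    · exact fun j hj h1 h2 h3 h4 => winB1 (hwin j hj) h1 h2 h3 h4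
    · exact fun j hj h1 h2 h3 h4 => winB2 (hwin j hj) h1 h2 h3 h4
    · exact fun j hj h1 h2 h3 h4 => winB3 (hwin j hj) h1 h2 h3 h4
    · exact fun j hj h1 h2 h3 h4 => winB4 (hwin j hj) h1 h2 h3 h4
    · exact fun j hj h1 h2 => winPeak (hwin j hj) h1 h2
    · exact fun j hj h1 h2 => winDip (hwin j hj) h1 h2
  have hbnd := teleBnd c (Nat.zero_le (k-1)) (fun j _ hjb => hstep j (by omega))
  refine ⟨c 0, c (k-1), ?_, ?_, ⟨ψ (S 0), rfl⟩, ⟨ψ (S (k-1)), rfl⟩, ?_, ?_⟩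
  · rw [abs_sub_comm]; exact hspan
  · rw [abs_sub_comm]
    have h1 := abs_le.2 (⟨by omega, by omega⟩ :
      -((k:ℤ) - 1) ≤ c (k-1) - c 0 ∧ c (k-1) - c 0 ≤ (k:ℤ) - 1)
    exact h1
  · -- capacity at hub S 0
    set PA : Fin (m+1) → Fin (2*m+2*k) := (fun u => ⟨u.val, by omega⟩) with hPAdef
    have gPA : ∀ u, (memberG m k).Adj (S 0) (PA u) := by
      intro u
      rw [memberG_adj, hSv 0 (by omega)]
      have e1 := wDnat_eval m k (m+1+0)
      have e2 := wDnat_eval m k (PA u).val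
      have e3 : (PA u).val = u.val := by simp [hPAdef]
      have e4 := u.isLt
      omega
    have nePA : ∀ u, S 0 ≠ PA u := by
      intro u
      apply hvne
      rw [hSv 0 (by omega)]
      have e3 : (PA u).val = u.val := by simp [hPAdef]
      have e4 := u.isLt
      omega
    have hcol : ∀ u, (ω (ψ (PA u)) : ℤ) = c 0 - 1 ∨ (ω (ψ (PA u)) : ℤ) = c 0 + 1 := by
      intro u
      have := (hiff _ _ (nePA u)).1 (gPA u)
      simp only [hcdef, hLamdef] at *
      rcases this with ⟨_, h⟩ | ⟨_, h⟩ <;> omega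
    have hinjPA : Function.Injective (fun u : Fin (m+1) => ψ (PA u)) := by
      intro u v h
      have := hinj h
      have h2 : (PA u).val = (PA v).val := by rw [this]
      simp only [hPAdef] at h2
      exact Fin.ext h2
    have hcard : (Finset.univ.image (fun u : Fin (m+1) => ψ (PA u))).card = m + 1 := by
      rw [Finset.card_image_of_injective _ hinjPA, Finset.card_univ, Fintype.card_fin]
    have hsub : (Finset.univ.image (fun u : Fin (m+1) => ψ (PA u))) ⊆
        (Finset.univ.filter (fun p : Fin N => (ω p : ℤ) = c 0 - 1)) ∪
        (Finset.univ.filter (fun p : Fin N => (ω p : ℤ) = c 0 + 1)) := by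
      intro x hx
      simp only [Finset.mem_image, Finset.mem_univ, true_and] at hx
      obtain ⟨u, rfl⟩ := hx
      rcases hcol u with h | h
      · exact Finset.mem_union_left _ (Finset.mem_filter.2 ⟨Finset.mem_univ _, h⟩)
      · exact Finset.mem_union_right _ (Finset.mem_filter.2 ⟨Finset.mem_univ _, h⟩)
    calc m + 1 = (Finset.univ.image (fun u : Fin (m+1) => ψ (PA u))).card := hcard.symm
      _ ≤ ((Finset.univ.filter (fun p : Fin N => (ω p : ℤ) = c 0 - 1)) ∪
            (Finset.univ.filter (fun p : Fin N => (ω p : ℤ) = c 0 + 1))).card :=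
          Finset.card_le_card hsub
      _ ≤ _ := Finset.card_union_le _ _
  · -- capacity at hub S (k-1)
    set PB : Fin (m+1) → Fin (2*m+2*k) := (fun u => ⟨m+k+1+u.val, by omega⟩) with hPBdef
    have gPB : ∀ u, (memberG m k).Adj (S (k-1)) (PB u) := by
      intro u
      rw [memberG_adj, hSv (k-1) (by omega)]
      have e1 := wDnat_eval m k (m+1+(k-1))
      have e2 := wDnat_eval m k (PB u).val
      have e3 : (PB u).val = m+k+1+u.val := by simp [hPBdef]
      have e4 := u.isLt
      omega
    have nePB : ∀ u, S (k-1) ≠ PB u := by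
      intro u
      apply hvne
      rw [hSv (k-1) (by omega)]
      have e3 : (PB u).val = m+k+1+u.val := by simp [hPBdef]
      omega
    have hcol : ∀ u, (ω (ψ (PB u)) : ℤ) = c (k-1) - 1 ∨ (ω (ψ (PB u)) : ℤ) = c (k-1) + 1 := by
      intro u
      have := (hiff _ _ (nePB u)).1 (gPB u)
      simp only [hcdef, hLamdef] at *
      rcases this with ⟨_, h⟩ | ⟨_, h⟩ <;> omega
    have hinjPB : Function.Injective (fun u : Fin (m+1) => ψ (PB u)) := by
      intro u v h
      have := hinj h
      have h2 : (PB u).val = (PB v).val := by rw [this]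
      simp only [hPBdef] at h2
      exact Fin.ext (by omega)
    have hcard : (Finset.univ.image (fun u : Fin (m+1) => ψ (PB u))).card = m + 1 := by
      rw [Finset.card_image_of_injective _ hinjPB, Finset.card_univ, Fintype.card_fin]
    have hsub : (Finset.univ.image (fun u : Fin (m+1) => ψ (PB u))) ⊆
        (Finset.univ.filter (fun p : Fin N => (ω p : ℤ) = c (k-1) - 1)) ∪
        (Finset.univ.filter (fun p : Fin N => (ω p : ℤ) = c (k-1) + 1)) := by
      intro x hx
      simp only [Finset.mem_image, Finset.mem_univ, true_and] at hx
      obtain ⟨u, rfl⟩ := hx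
      rcases hcol u with h | h
      · exact Finset.mem_union_left _ (Finset.mem_filter.2 ⟨Finset.mem_univ _, h⟩)
      · exact Finset.mem_union_right _ (Finset.mem_filter.2 ⟨Finset.mem_univ _, h⟩)
    calc m + 1 = (Finset.univ.image (fun u : Fin (m+1) => ψ (PB u))).card := hcard.symm
      _ ≤ ((Finset.univ.filter (fun p : Fin N => (ω p : ℤ) = c (k-1) - 1)) ∪
            (Finset.univ.filter (fun p : Fin N => (ω p : ℤ) = c (k-1) + 1))).card :=
          Finset.card_le_card hsub
      _ ≤ _ := Finset.card_union_le _ _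

lemma occ_sum_le_gen (N : ℕ) (ω : Fin N → ℕ) (SS : Finset ℤ) (g : ℤ → ℤ)
    (hg : Function.Injective g) :
    (∑ a ∈ SS, (Finset.univ.filter (fun p : Fin N => (ω p : ℤ) = g a)).card) ≤ N := by
  classical
  have hdisj : ∀ a ∈ SS, ∀ b ∈ SS, a ≠ b →
      Disjoint (Finset.univ.filter (fun p : Fin N => (ω p : ℤ) = g a))
               (Finset.univ.filter (fun p : Fin N => (ω p : ℤ) = g b)) := by
    intro a _ b _ hne
    rw [Finset.disjoint_left]
    intro p hp hq
    rw [Finset.mem_filter] at hp hq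
    exact hne (hg (hp.2 ▸ hq.2 ▸ rfl : g a = g b))
  calc (∑ a ∈ SS, (Finset.univ.filter (fun p : Fin N => (ω p : ℤ) = g a)).card)
      = (SS.biUnion (fun a => Finset.univ.filter (fun p : Fin N => (ω p : ℤ) = g a))).card :=
        (Finset.card_biUnion hdisj).symm
    _ ≤ (Finset.univ : Finset (Fin N)).card := Finset.card_le_card (Finset.subset_univ _)
    _ = N := by simp

lemma occ_sum_le_sub (N : ℕ) (ω : Fin N → ℕ) (SS : Finset ℤ) :
    (∑ a ∈ SS, (Finset.univ.filter (fun p : Fin N => (ω p : ℤ) = a - 1)).card) ≤ N := by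
  have h := occ_sum_le_gen N ω SS (fun a => a - 1) (fun x y h => by dsimp only at h; omega)
  calc (∑ a ∈ SS, (Finset.univ.filter (fun p : Fin N => (ω p : ℤ) = a - 1)).card)
      = (∑ a ∈ SS, (Finset.univ.filter (fun p : Fin N => (ω p : ℤ) = (fun a => a - 1) a)).card) := by
        apply Finset.sum_congr rfl
        intro a _
        rfl
    _ ≤ N := h

lemma occ_sum_le_add (N : ℕ) (ω : Fin N → ℕ) (SS : Finset ℤ) :
    (∑ a ∈ SS, (Finset.univ.filter (fun p : Fin N => (ω p : ℤ) = a + 1)).card) ≤ N := by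
  have h := occ_sum_le_gen N ω SS (fun a => a + 1) (fun x y h => by dsimp only at h; omega)
  calc (∑ a ∈ SS, (Finset.univ.filter (fun p : Fin N => (ω p : ℤ) = a + 1)).card)
      = (∑ a ∈ SS, (Finset.univ.filter (fun p : Fin N => (ω p : ℤ) = (fun a => a + 1) a)).card) := by
        apply Finset.sum_congr rfl
        intro a _
        rfl
    _ ≤ N := h

theorem universal_3K16_free_lower_bound :
    ∃ c : ℝ, 0 < c ∧ ∀ n : ℕ, 1 ≤ n →
      ∀ (W : Type) [Fintype W] (H : SimpleGraph W), IsBPG H →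
        (∀ (U : Type) [Fintype U] (G : SimpleGraph U), IsBPG G →
          Fintype.card U ≤ n → ¬ Nonempty (threeK16 ↪g G) →
          Nonempty (G ↪g H)) →
        c * (n : ℝ) ^ ((3 : ℝ) / 2) ≤ Fintype.card W := by
  classical
  refine ⟨1/2000, by norm_num, ?_⟩
  intro n hn W _ H hBPG huniv
  obtain ⟨kH, v, w, hvw⟩ := hBPG
  set ω : Fin (Fintype.card W) → ℕ := (fun p => (w p).val) with hωdef
  have hostAdj : ∀ i j : Fin (Fintype.card W), i ≠ j → (H.Adj (v i) (v j) ↔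
      (i.val < j.val ∧ ω j = ω i + 1) ∨ (j.val < i.val ∧ ω i = ω j + 1)) := by
    intro i j hne
    rcases lt_trichotomy i j with h | h | h
    · rw [hvw i j h]
      constructor
      · intro he
        exact Or.inl ⟨Fin.lt_def.1 h, he⟩
      · rintro (⟨_, he⟩ | ⟨hlt, _⟩)
        · exact he
        · exact absurd (Fin.lt_def.1 h) (by omega)
    · exact absurd h hne
    · rw [SimpleGraph.adj_comm, hvw j i h]
      constructor
      · intro he
        exact Or.inr ⟨Fin.lt_def.1 h, he⟩
      · rintro (⟨hlt, _⟩ | ⟨_, he⟩)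
        · have := Fin.lt_def.1 h; omega
        · exact he
  have hpow : ∀ x : ℕ, 0 < x → ((x:ℝ)) ^ ((3:ℝ)/2) = (x:ℝ) * Real.sqrt x := by
    intro x hx
    have hx' : (0:ℝ) < x := by exact_mod_cast hx
    rw [show (3:ℝ)/2 = 1 + 1/2 by norm_num, Real.rpow_add hx', Real.rpow_one,
      Real.sqrt_eq_rpow]
  -- every universal host is nonempty
  have hW1 : 1 ≤ (Fintype.card W) := by
    have h1 : IsBPG (letterGraph 1 (fun _ => 0)) := isBPG_letterGraph 1 _
    have h2 : ¬ Nonempty (threeK16 ↪g letterGraph 1 (fun _ => 0)) := by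
      rintro ⟨f⟩
      have h := f.injective (Subsingleton.elim (f ((0:Fin 3),(0:Fin 7))) (f (1,0)))
      exact absurd h (by decide)
    obtain ⟨e⟩ := huniv (Fin 1) (letterGraph 1 (fun _ => 0)) h1
      (by simpa using hn) h2
    have : Nonempty W := ⟨e ⟨0, by omega⟩⟩
    exact Fintype.card_pos_iff.2 this
  rcases lt_or_ge n 64 with hsmall | hbig
  · -- small n : trivial bound
    rw [hpow n (by omega)]
    have h1 : Real.sqrt n ≤ 8 := by
      rw [show (8:ℝ) = Real.sqrt 64 by
        rw [show (64:ℝ) = 8^2 by norm_num, Real.sqrt_sq (by norm_num)]]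
      exact Real.sqrt_le_sqrt (by exact_mod_cast hsmall.le)
    have h2 : (n:ℝ) ≤ 64 := by exact_mod_cast hsmall.le
    have h3 : (0:ℝ) ≤ (n:ℝ) := by positivity
    have h4 : (0:ℝ) ≤ Real.sqrt n := Real.sqrt_nonneg _
    have h5 : (n:ℝ) * Real.sqrt n ≤ 64 * 8 := by
      exact mul_le_mul h2 h1 h4 (by norm_num)
    have h6 : (1:ℝ) ≤ (Fintype.card W) := by exact_mod_cast hW1
    nlinarith
  -- main case
  set m := n / 4 with hmdef
  set T := n / 32 with hTdef
  set Fat : Finset ℤ := ((Finset.univ.image (fun p : Fin (Fintype.card W) => (ω p : ℤ))).filter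
    (fun a => m + 1 ≤ (Finset.univ.filter (fun p : Fin (Fintype.card W) => (ω p : ℤ) = a - 1)).card
            + (Finset.univ.filter (fun p : Fin (Fintype.card W) => (ω p : ℤ) = a + 1)).card)) with hFatdef
  have hex : ∀ t : ℕ, ∃ a b : ℤ, (1 ≤ t ∧ t ≤ T) →
      ((4*(t:ℤ)+1 ≤ |a - b| ∧ |a - b| ≤ 4*(t:ℤ)+3) ∧ a ∈ Fat ∧ b ∈ Fat) := by
    intro t
    by_cases ht : 1 ≤ t ∧ t ≤ T
    · -- build the member graph and embed it
      set kt := 4*t + 4 with hktdef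
      have hsize : 2*m + 2*kt ≤ n := by
        rw [hktdef, hmdef]
        have h1 : 4 * (n/4) ≤ n := Nat.mul_div_le n 4
        have h2 : t ≤ n / 32 := ht.2
        omega
      have hkt3 : 3 ≤ kt := by omega
      obtain ⟨e⟩ := huniv (Fin (2*m+2*kt)) (memberG m kt)
        (isBPG_letterGraph _ _)
        (by simpa using hsize)
        (member_no3K16 m kt hkt3)
      set ψ : Fin (2*m+2*kt) → Fin (Fintype.card W) := (fun a => v.symm (e a)) with hψdef
      have hinjψ : Function.Injective ψ := by
        intro a b h
        exact e.injective (v.symm.injective h)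
      have hadj' : ∀ a b : Fin (2*m+2*kt), a ≠ b →
          ((memberG m kt).Adj a b ↔
            ((ψ a).val < (ψ b).val ∧ ω (ψ b) = ω (ψ a) + 1) ∨
            ((ψ b).val < (ψ a).val ∧ ω (ψ a) = ω (ψ b) + 1)) := by
        intro a b hne
        have h1 : (memberG m kt).Adj a b ↔ H.Adj (e a) (e b) := e.map_adj_iff.symm
        have h2 : v (ψ a) = e a := v.apply_symm_apply (e a)
        have h3 : v (ψ b) = e b := v.apply_symm_apply (e b)
        rw [h1, ← h2, ← h3]
        exact hostAdj (ψ a) (ψ b) (fun h => hne (hinjψ h))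
      obtain ⟨a, b, hlo, hhi, ⟨p, hp⟩, ⟨q, hq⟩, hcapA, hcapB⟩ :=
        member_analysis m kt (Fintype.card W) hkt3 ω ψ hinjψ hadj'
      refine ⟨a, b, fun _ => ⟨⟨?_, ?_⟩, ?_, ?_⟩⟩
      · have : ((kt:ℕ):ℤ) = 4*(t:ℤ) + 4 := by rw [hktdef]; push_cast; ring
        omega
      · have : ((kt:ℕ):ℤ) = 4*(t:ℤ) + 4 := by rw [hktdef]; push_cast; ring
        omega
      · rw [hFatdef]
        refine Finset.mem_filter.2 ⟨?_, hcapA⟩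
        exact Finset.mem_image.2 ⟨p, Finset.mem_univ _, hp⟩
      · rw [hFatdef]
        refine Finset.mem_filter.2 ⟨?_, hcapB⟩
        exact Finset.mem_image.2 ⟨q, Finset.mem_univ _, hq⟩
    · exact ⟨0, 0, fun hc => absurd hc ht⟩
  choose A B hAB using hex
  -- T ≤ Fat.card ^ 2
  have hTF : T ≤ Fat.card * Fat.card := by
    have hmaps : ∀ t ∈ Finset.Icc 1 T, (A t, B t) ∈ Fat ×ˢ Fat := by
      intro t ht
      rw [Finset.mem_Icc] at ht
      obtain ⟨_, h2, h3⟩ := hAB t ⟨ht.1, ht.2⟩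
      exact Finset.mem_product.2 ⟨h2, h3⟩
    have hinj : Set.InjOn (fun t => (A t, B t)) (Finset.Icc 1 T) := by
      intro t ht t' ht' heq
      simp only [Finset.coe_Icc, Set.mem_Icc] at ht ht'
      obtain ⟨⟨hl, hh⟩, _, _⟩ := hAB t ⟨ht.1, ht.2⟩
      obtain ⟨⟨hl', hh'⟩, _, _⟩ := hAB t' ⟨ht'.1, ht'.2⟩
      have hA : A t = A t' := congrArg Prod.fst heq
      have hB : B t = B t' := congrArg Prod.snd heq
      rw [hA, hB] at hl hh
      have : (t:ℤ) = t' := by omega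
      exact_mod_cast this
    calc T = (Finset.Icc 1 T).card := by rw [Nat.card_Icc]; omega
      _ ≤ (Fat ×ˢ Fat).card := Finset.card_le_card_of_injOn _ hmaps hinj
      _ = Fat.card * Fat.card := Finset.card_product _ _
  -- Fat.card * (m+1) ≤ 2 (Fintype.card W)
  have hFN : Fat.card * (m + 1) ≤ 2 * (Fintype.card W) := by
    have h1 : Fat.card * (m+1) ≤ ∑ a ∈ Fat,
        ((Finset.univ.filter (fun p : Fin (Fintype.card W) => (ω p : ℤ) = a - 1)).card
          + (Finset.univ.filter (fun p : Fin (Fintype.card W) => (ω p : ℤ) = a + 1)).card) := by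
      have := Finset.card_nsmul_le_sum Fat
        (fun a => (Finset.univ.filter (fun p : Fin (Fintype.card W) => (ω p : ℤ) = a - 1)).card
          + (Finset.univ.filter (fun p : Fin (Fintype.card W) => (ω p : ℤ) = a + 1)).card)
        (m+1)
        (fun a ha => (Finset.mem_filter.1 ha).2)
      simpa [smul_eq_mul] using this
    have h2 : (∑ a ∈ Fat,
        ((Finset.univ.filter (fun p : Fin (Fintype.card W) => (ω p : ℤ) = a - 1)).card
          + (Finset.univ.filter (fun p : Fin (Fintype.card W) => (ω p : ℤ) = a + 1)).card))
        = (∑ a ∈ Fat, (Finset.univ.filter (fun p : Fin (Fintype.card W) => (ω p : ℤ) = a - 1)).card)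
        + (∑ a ∈ Fat, (Finset.univ.filter (fun p : Fin (Fintype.card W) => (ω p : ℤ) = a + 1)).card) :=
      Finset.sum_add_distrib
    have h3 := occ_sum_le_sub (Fintype.card W) ω Fat
    have h4 := occ_sum_le_add (Fintype.card W) ω Fat
    omega
  -- real arithmetic
  have hT1 : 64 * T ≥ n := by
    rw [hTdef]
    omega
  have hm1 : n ≤ 4 * (m + 1) := by
    rw [hmdef]
    omega
  have hF0 : (0:ℝ) ≤ (Fat.card : ℝ) := by positivity
  have hs1 : Real.sqrt n ≤ 8 * Real.sqrt T := by
    have h1 : (n:ℝ) ≤ 64 * T := by exact_mod_cast hT1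
    have h2 : Real.sqrt ((64:ℝ) * T) = 8 * Real.sqrt T := by
      rw [show (64:ℝ) = 8^2 by norm_num, Real.sqrt_mul (by positivity), Real.sqrt_sq (by norm_num)]
    calc Real.sqrt n ≤ Real.sqrt ((64:ℝ) * T) := Real.sqrt_le_sqrt h1
      _ = 8 * Real.sqrt T := h2
  have hs2 : Real.sqrt T ≤ Fat.card := by
    have h1 : (T:ℝ) ≤ ((Fat.card : ℝ)) ^ 2 := by
      rw [sq]
      exact_mod_cast hTF
    calc Real.sqrt T ≤ Real.sqrt ((Fat.card:ℝ)^2) := Real.sqrt_le_sqrt h1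
      _ = Fat.card := Real.sqrt_sq hF0
  rw [hpow n (by omega)]
  have hmain : (n:ℝ) * Real.sqrt n ≤ 64 * (Fintype.card W) := by
    have h1 : (n:ℝ) * Real.sqrt n ≤ (4 * ((m:ℝ)+1)) * (8 * (Fat.card:ℝ)) := by
      apply mul_le_mul
      · exact_mod_cast hm1
      · calc Real.sqrt n ≤ 8 * Real.sqrt T := hs1
          _ ≤ 8 * Fat.card := by linarith
      · exact Real.sqrt_nonneg _
      · positivity
    have h2 : ((Fat.card : ℝ)) * ((m:ℝ) + 1) ≤ 2 * (Fintype.card W) := by exact_mod_cast hFN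
    nlinarith
  have hN0 : (0:ℝ) ≤ ((Fintype.card W):ℝ) := by positivity
  have hsn : (0:ℝ) ≤ (n:ℝ) * Real.sqrt n := by positivity
  calc (1/2000 : ℝ) * ((n:ℝ) * Real.sqrt n) ≤ (1/2000) * (64 * (Fintype.card W)) := by linarith
    _ ≤ (Fintype.card W) := by linarith
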